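/- arXiv:2603.06938 — 2 statements merged into one kernel-verified Lean document; each statement's English description precedes it below -/
import Mathlib

section
/- Let A be a real N×N matrix and, for each t ∈ {1,…,T} and e ∈ {1,…,E}, let B_t^(e) ∈ ℝ^{N×P}, X_t^(e) ∈ ℝ^P, and let C_t ∈ ℝ^{N×P} be a readout shared by all experts. Suppose the routing weights are time-invariant: π_{t,e} = π_e ≥ 0 for all t. Let the separated model be h_t^(e) = A h_{t-1}^(e) + B_t^(e) X_t^(e) with h_0^(e) = 0 for every e, and output Y_t^sep = Σ_{e=1}^E π_e C_tᵀ h_t^(e). Let the mixed model be h_t = A h_{t-1} + Σ_{e=1}^E π_e B_t^(e) X_t^(e) with h_0 = 0, and output Y_t^mix = C_tᵀ h_t. Then Y_t^sep = Y_t^mix for all t ∈ {1,…,T}. -/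
private lemma mulVec_sum' {n m α ι : Type*} [Fintype m] [NonUnitalNonAssocSemiring α]
    (s : Finset ι) (M : Matrix n m α) (f : ι → m → α) :
    M.mulVec (∑ i ∈ s, f i) = ∑ i ∈ s, M.mulVec (f i) := by
  ext j
  simp only [Matrix.mulVec, dotProduct, Finset.sum_apply, Finset.mul_sum]
  exact Finset.sum_comm

/-- **Equality regime: separated vs parameter-mixed MoE-SSM.**
With a shared transition `A`, a shared readout `C_t`, time-invariant nonnegative
routing weights `π_e`, and zero initial states, the output of the MoE of separated
SSMs equals the output of the MoE-parameterized SSM at every time `t ∈ {1,…,T}`. -/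
theorem separated_eq_mixed_time_invariant_routing
    (N P E T : ℕ)
    (A : Matrix (Fin N) (Fin N) ℝ)
    (B : ℕ → Fin E → Matrix (Fin N) (Fin P) ℝ)
    (X : ℕ → Fin E → Fin P → ℝ)
    (Ct : ℕ → Matrix (Fin N) (Fin P) ℝ)   -- readout shared by all experts
    (π : Fin E → ℝ) (hπ : ∀ e, 0 ≤ π e)   -- time-invariant routing weights
    -- separated model
    (hsep : ℕ → Fin E → Fin N → ℝ)
    (hsep0 : ∀ e, hsep 0 e = 0)
    (hseprec : ∀ t, 1 ≤ t → t ≤ T → ∀ e,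
      hsep t e = A.mulVec (hsep (t - 1) e) + (B t e).mulVec (X t e))
    (Ysep : ℕ → Fin P → ℝ)
    (hYsep : ∀ t, 1 ≤ t → t ≤ T →
      Ysep t = ∑ e, π e • (Ct t).transpose.mulVec (hsep t e))
    -- mixed model
    (hmix : ℕ → Fin N → ℝ)
    (hmix0 : hmix 0 = 0)
    (hmixrec : ∀ t, 1 ≤ t → t ≤ T →
      hmix t = A.mulVec (hmix (t - 1)) + ∑ e, π e • (B t e).mulVec (X t e))
    (Ymix : ℕ → Fin P → ℝ)
    (hYmix : ∀ t, 1 ≤ t → t ≤ T →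
      Ymix t = (Ct t).transpose.mulVec (hmix t)) :
    ∀ t, 1 ≤ t → t ≤ T → Ysep t = Ymix t := by
  have key : ∀ t, t ≤ T → hmix t = ∑ e, π e • hsep t e := by
    intro t
    induction t with
    | zero =>
      intro _
      simp [hmix0, hsep0]
    | succ n ih =>
      intro hle
      have h1 : 1 ≤ n + 1 := Nat.succ_le_succ (Nat.zero_le n)
      rw [hmixrec (n+1) h1 hle]
      have hn : n ≤ T := Nat.le_of_succ_le hle
      have := ih hn
      simp only [Nat.add_sub_cancel, this]
      rw [mulVec_sum']
      rw [← Finset.sum_add_distrib]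
      apply Finset.sum_congr rfl
      intro e _
      rw [hseprec (n+1) h1 hle e, smul_add]
      congr 1
      · rw [Matrix.mulVec_smul]
        simp
  intro t h1 h2
  rw [hYsep t h1 h2, hYmix t h1 h2, key t h2, mulVec_sum']
  apply Finset.sum_congr rfl
  intro e _
  rw [Matrix.mulVec_smul]
end

section
/- For every choice of affine functions b, c, u : ℝ → ℝ (functions of the form x ↦ αx + β with real coefficients), the function x ↦ c(x)·b(x)·u(x) does not coincide with the logistic sigmoid σ(x) = 1/(1 + e^{−x}) on all of ℝ. Consequently, in the one-step scalar specialization (T = 1, N = P = 1, A = 0, h_0 = 0), no single-expert layer whose streams B_1, C_1, X_1 are affine functions of the input can represent the function σ, while the two-expert MoE-parameterized layer with softmax routing can; hence the class of functions representable by the MoE-parameterized layer strictly contains the class representable by single-expert linear-projection layers, with both executing one state update. -/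
open scoped BigOperators

/-- An affine function `x ↦ α x + β` on `ℝ`. -/
def IsAffine (f : ℝ → ℝ) : Prop := ∃ α β : ℝ, ∀ x, f x = α * x + β

/-- Functions computed by a one-step scalar single-expert layer
(`T = 1`, `N = P = 1`, `A = 0`, `h_0 = 0`) whose streams `B_1, C_1, X_1` are
affine functions of the input: `Y_1(x) = c(x)·b(x)·u(x)`. -/
def SingleExpertClass : Set (ℝ → ℝ) :=
  {f | ∃ b c u : ℝ → ℝ, IsAffine b ∧ IsAffine c ∧ IsAffine u ∧
    ∀ x, f x = c x * b x * u x}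

/-- Functions computed by a one-step scalar MoE-parameterized layer
(`T = 1`, `N = P = 1`, `A = 0`, `h_0 = 0`) with `E` experts whose streams and
router logits are affine functions of the input and softmax routing:
`Y_1(x) = (Σ_e π_e(x) c_e(x)) · (Σ_e π_e(x) b_e(x) u_e(x))`, where
`π_e(x) = exp(g_e(x)) / Σ_j exp(g_j(x))`. -/
def MoEParamClass : Set (ℝ → ℝ) :=
  {f | ∃ (E : ℕ) (g b c u : Fin E → ℝ → ℝ),
    (∀ e, IsAffine (g e) ∧ IsAffine (b e) ∧ IsAffine (c e) ∧ IsAffine (u e)) ∧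
    ∀ x, f x =
      (∑ e, (Real.exp (g e x) / ∑ j, Real.exp (g j x)) * c e x) *
      (∑ e, (Real.exp (g e x) / ∑ j, Real.exp (g j x)) * (b e x * u e x))}

lemma isAffine_const (k : ℝ) : IsAffine (fun _ => k) := ⟨0, k, fun x => by ring⟩

lemma isAffine_id : IsAffine (fun x => x) := ⟨1, 0, fun x => by ring⟩

lemma sigma_pos (x : ℝ) : 0 < 1 / (1 + Real.exp (-x)) := by positivity

lemma sigma_lt_one (x : ℝ) : 1 / (1 + Real.exp (-x)) < 1 := by
  rw [div_lt_one (by positivity)]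
  linarith [Real.exp_pos (-x)]

lemma sigma_not_poly (b c u : ℝ → ℝ) (hb : IsAffine b) (hc : IsAffine c)
    (hu : IsAffine u) :
    ¬ ∀ x : ℝ, c x * b x * u x = 1 / (1 + Real.exp (-x)) := by
  obtain ⟨ab, bb, hbf⟩ := hb
  obtain ⟨ac, bc, hcf⟩ := hc
  obtain ⟨au, bu, huf⟩ := hu
  intro H
  set p : Polynomial ℝ :=
    (Polynomial.C ac * Polynomial.X + Polynomial.C bc) *
    ((Polynomial.C ab * Polynomial.X + Polynomial.C bb) *
     (Polynomial.C au * Polynomial.X + Polynomial.C bu)) with hp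
  have hpe : ∀ x : ℝ, p.eval x = 1 / (1 + Real.exp (-x)) := by
    intro x
    have h := H x
    rw [hbf x, hcf x, huf x] at h
    rw [hp]
    simpa [mul_assoc] using h
  by_cases hdeg : 0 < p.degree
  · obtain ⟨x, hx⟩ := ((Polynomial.abs_tendsto_atTop p hdeg).eventually_ge_atTop 2).exists
    rw [hpe x, abs_of_pos (sigma_pos x)] at hx
    linarith [sigma_lt_one x]
  · have ha := Polynomial.degree_le_zero_iff.mp (not_lt.mp hdeg)
    have h01 : (1:ℝ) / (1 + Real.exp (-(0:ℝ))) = 1 / (1 + Real.exp (-(1:ℝ))) := by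
      rw [← hpe 0, ← hpe 1, ha]; simp
    have hne : (1:ℝ) + Real.exp (-(0:ℝ)) ≠ 0 := by positivity
    have hne' : (1:ℝ) + Real.exp (-(1:ℝ)) ≠ 0 := by positivity
    have hexp : Real.exp (-(0:ℝ)) = Real.exp (-(1:ℝ)) := by
      field_simp at h01
      linarith
    have := Real.exp_injective hexp
    norm_num at this

lemma sigma_in_moe : (fun x : ℝ => 1 / (1 + Real.exp (-x))) ∈ MoEParamClass := by
  refine ⟨2, ![fun _ => 0, fun x => x], ![fun _ => 1, fun _ => 1],
    ![fun _ => 0, fun _ => 1], ![fun _ => 1, fun _ => 1], ?_, ?_⟩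
  · intro e
    fin_cases e
    · exact ⟨isAffine_const 0, isAffine_const 1, isAffine_const 0, isAffine_const 1⟩
    · exact ⟨isAffine_id, isAffine_const 1, isAffine_const 1, isAffine_const 1⟩
  · intro x
    have h1 : (0:ℝ) < 1 + Real.exp x := by positivity
    have h2 : (0:ℝ) < 1 + Real.exp (-x) := by positivity
    simp only [Fin.sum_univ_two, Matrix.cons_val_zero, Matrix.cons_val_one, Matrix.head_cons,
      Real.exp_zero]
    rw [Real.exp_neg]
    have he := (Real.exp_pos x).ne'
    have h3 : (0:ℝ) < 1 + (Real.exp x)⁻¹ := by positivity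
    field_simp
    ring

lemma single_subset_moe : SingleExpertClass ⊆ MoEParamClass := by
  rintro f ⟨b, c, u, hb, hc, hu, hf⟩
  refine ⟨1, ![fun _ => 0], ![b], ![c], ![u], ?_, ?_⟩
  · intro e
    fin_cases e
    exact ⟨isAffine_const 0, hb, hc, hu⟩
  · intro x
    simp only [Fin.sum_univ_one, Matrix.cons_val_zero, Real.exp_zero]
    rw [hf x]
    field_simp

/-- **Strict expressivity gain of the MoE-parameterized layer with one recurrence.**
No single-expert layer with affine streams represents the logistic sigmoid
`σ(x) = 1/(1 + e^{−x})`, while the two-expert MoE-parameterized layer with softmax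
routing does; hence the function class of the MoE-parameterized layer strictly
contains that of single-expert linear-projection layers, with both executing one
state update. -/
theorem moe_strict_expressivity_gain :
    (∀ b c u : ℝ → ℝ, IsAffine b → IsAffine c → IsAffine u →
      ¬ ∀ x : ℝ, c x * b x * u x = 1 / (1 + Real.exp (-x))) ∧
    (fun x : ℝ => 1 / (1 + Real.exp (-x))) ∈ MoEParamClass ∧
    (fun x : ℝ => 1 / (1 + Real.exp (-x))) ∉ SingleExpertClass ∧
    SingleExpertClass ⊂ MoEParamClass := by
  have hnot : (fun x : ℝ => 1 / (1 + Real.exp (-x))) ∉ SingleExpertClass := by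
    rintro ⟨b, c, u, hb, hc, hu, hf⟩
    exact sigma_not_poly b c u hb hc hu (fun x => (hf x).symm)
  exact ⟨fun b c u hb hc hu => sigma_not_poly b c u hb hc hu, sigma_in_moe, hnot,
    ⟨single_subset_moe, fun h => hnot (h sigma_in_moe)⟩⟩
end
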